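/- For all φ, ψ ∈ L_PAPAL: (1) □⁺(φ∧ψ) ↔ (□⁺φ ∧ □⁺ψ) is valid on S5; (2) if φ is valid on S5 then □⁺φ is valid on S5; (3) □⁺φ → φ is valid на S5; (4) for every agent a, K_a □⁺φ → □⁺ K_a φ is valid on S5. -/

import Mathlib

/-- An epistemic (S5) model: a nonempty set of states, an equivalence
relation for each agent, and a valuation of atoms. -/
structure EpiModel (A P : Type) where
  S : Type
  ne : Nonempty S
  rel : A → S → S → Prop
  equiv : ∀ a, Equivalence (rel a)
  val : P → Set S

/-- Positive formulas L_EL⁺ : p | ¬p | ∧ | ∨ | K_a. -/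
inductive PosForm (A P : Type) where
  | atom : P → PosForm A P
  | natom : P → PosForm A P
  | and : PosForm A P → PosForm A P → PosForm A P
  | or : PosForm A P → PosForm A P → PosForm A P
  | know : A → PosForm A P → PosForm A P

/-- Satisfaction of a positive formula, relativized to a current domain `D`
(representing the submodel of `M` induced by `D`). -/
def PosForm.sat {A P : Type} (M : EpiModel A P) : PosForm A P → Set M.S → M.S → Prop
  | .atom p, _, s => s ∈ M.val p
  | .natom p, _, s => s ∉ M.val p
  | .and φ ψ, D, s => PosForm.sat M φ D s ∧ PosForm.sat M ψ D s
  | .or φ ψ, D, s => PosForm.sat M φ D s ∨ PosForm.sat M ψ D s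
  | .know a φ, D, s => ∀ t, M.rel a s t → t ∈ D → PosForm.sat M φ D t

/-- The language L_PAPAL : atoms, ¬, ∧, K_a, announcements [ψ]φ and the
positive arbitrary-announcement quantifier □⁺. -/
inductive Form (A P : Type) where
  | atom : P → Form A P
  | neg : Form A P → Form A P
  | and : Form A P → Form A P → Form A P
  | know : A → Form A P → Form A P
  | ann : Form A P → Form A P → Form A P
  | pbox : Form A P → Form A P

/-- Satisfaction, relativized to a current domain `D`: `Form.sat M φ D s`
means that φ holds at state `s` of the restriction of `M` to `D`.
Announcement `[ψ]φ` further restricts the domain to the states of `D`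
satisfying ψ; `□⁺φ` quantifies over announcements of positive formulas. -/
def Form.sat {A P : Type} (M : EpiModel A P) : Form A P → Set M.S → M.S → Prop
  | .atom p, _, s => s ∈ M.val p
  | .neg φ, D, s => ¬ Form.sat M φ D s
  | .and φ ψ, D, s => Form.sat M φ D s ∧ Form.sat M ψ D s
  | .know a φ, D, s => ∀ t, M.rel a s t → t ∈ D → Form.sat M φ D t
  | .ann ψ φ, D, s => Form.sat M ψ D s → Form.sat M φ {t | t ∈ D ∧ Form.sat M ψ D t} s
  | .pbox φ, D, s => ∀ χ : PosForm A P, PosForm.sat M χ D s →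
      Form.sat M φ {t | t ∈ D ∧ PosForm.sat M χ D t} s

/-- Truth at a pointed model `M_s`. -/
def Sat {A P : Type} (M : EpiModel A P) (s : M.S) (φ : Form A P) : Prop :=
  Form.sat M φ Set.univ s

def Form.or {A P : Type} (φ ψ : Form A P) : Form A P := .neg (.and (.neg φ) (.neg ψ))
def Form.imp {A P : Type} (φ ψ : Form A P) : Form A P := Form.or (.neg φ) ψ
def Form.iff {A P : Type} (φ ψ : Form A P) : Form A P := .and (Form.imp φ ψ) (Form.imp ψ φ)
def Form.pdia {A P : Type} (φ : Form A P) : Form A P := .neg (.pbox (.neg φ))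
def Form.lknow {A P : Type} (a : A) (φ : Form A P) : Form A P := .neg (.know a (.neg φ))

/-- Validity on the class S5 of all epistemic models. -/
def Valid (A P : Type) (φ : Form A P) : Prop :=
  ∀ (M : EpiModel A P) (s : M.S), Sat M s φ

/-- Restriction of a model to a nonempty set of states. -/
def EpiModel.restrict {A P : Type} (M : EpiModel A P) (D : Set M.S) (hD : D.Nonempty) :
    EpiModel A P where
  S := D
  ne := ⟨⟨hD.choose, hD.choose_spec⟩⟩
  rel a x y := M.rel a x.val y.val
  equiv a := ⟨fun x => (M.equiv a).refl x.val, fun h => (M.equiv a).symm h,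
    fun h1 h2 => (M.equiv a).trans h1 h2⟩
  val p := {x | x.val ∈ M.val p}

lemma posSat_restrict {A P : Type} (M : EpiModel A P) (D : Set M.S) (hD : D.Nonempty)
    (χ : PosForm A P) :
    ∀ (E : Set M.S), E ⊆ D → ∀ s : D,
      PosForm.sat (M.restrict D hD) χ {x : D | x.val ∈ E} s ↔ PosForm.sat M χ E s.val := by
  induction χ with
  | atom p => intro E hE s; simp [PosForm.sat, EpiModel.restrict]; exact Iff.rfl
  | natom p => intro E hE s; simp [PosForm.sat, EpiModel.restrict]; exact Iff.rfl
  | and φ ψ ih1 ih2 => intro E hE s; simp only [PosForm.sat]; rw [ih1 E hE s, ih2 E hE s]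
  | or φ ψ ih1 ih2 => intro E hE s; simp only [PosForm.sat]; rw [ih1 E hE s, ih2 E hE s]
  | know a φ ih =>
    intro E hE s
    simp only [PosForm.sat]
    constructor
    · intro h t hrel htE
      exact (ih E hE ⟨t, hE htE⟩).mp (h ⟨t, hE htE⟩ hrel htE)
    · intro h t hrel htE
      exact (ih E hE t).mpr (h t.val hrel htE)

lemma sat_restrict {A P : Type} (M : EpiModel A P) (D : Set M.S) (hD : D.Nonempty)
    (φ : Form A P) :
    ∀ (E : Set M.S), E ⊆ D → ∀ s : D,
      Form.sat (M.restrict D hD) φ {x : D | x.val ∈ E} s ↔ Form.sat M φ E s.val := by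
  induction φ with
  | atom p => intro E hE s; simp [Form.sat, EpiModel.restrict]; exact Iff.rfl
  | neg φ ih => intro E hE s; simp only [Form.sat]; rw [ih E hE s]
  | and φ ψ ih1 ih2 => intro E hE s; simp only [Form.sat]; rw [ih1 E hE s, ih2 E hE s]
  | know a φ ih =>
    intro E hE s
    simp only [Form.sat]
    constructor
    · intro h t hrel htE
      exact (ih E hE ⟨t, hE htE⟩).mp (h ⟨t, hE htE⟩ hrel htE)
    · intro h t hrel htE
      exact (ih E hE t).mpr (h t.val hrel htE)
  | ann ψ φ ih1 ih2 =>
    intro E hE s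
    simp only [Form.sat]
    have hset : {t : (M.restrict D hD).S | t ∈ {x : D | x.val ∈ E} ∧
        Form.sat (M.restrict D hD) ψ {x : D | x.val ∈ E} t}
        = {x : (M.restrict D hD).S | x.val ∈ {t | t ∈ E ∧ Form.sat M ψ E t}} := by
      ext x
      simp only [Set.mem_setOf_eq]
      exact and_congr Iff.rfl (ih1 E hE x)
    exact imp_congr (ih1 E hE s) ((Iff.of_eq (congrArg (fun Z => Form.sat (M.restrict D hD) φ Z s) hset)).trans (ih2 _ (fun t ht => hE ht.1) s))
  | pbox φ ih =>
    intro E hE s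
    simp only [Form.sat]
    have hset : ∀ χ : PosForm A P, {t : (M.restrict D hD).S | t ∈ {x : D | x.val ∈ E} ∧
        PosForm.sat (M.restrict D hD) χ {x : D | x.val ∈ E} t}
        = {x : (M.restrict D hD).S | x.val ∈ {t | t ∈ E ∧ PosForm.sat M χ E t}} := by
      intro χ
      ext x
      simp only [Set.mem_setOf_eq]
      exact and_congr Iff.rfl (posSat_restrict M D hD χ E hE x)
    constructor
    · intro h χ hχ
      have h1 := h χ ((posSat_restrict M D hD χ E hE s).mpr hχ)
      replace h1 := cast (congrArg (fun Z => Form.sat (M.restrict D hD) φ Z s) (hset χ)) h1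
      exact (ih _ (fun t ht => hE ht.1) s).mp h1
    · intro h χ hχ
      have h1 := h χ ((posSat_restrict M D hD χ E hE s).mp hχ)
      refine cast (congrArg (fun Z => Form.sat (M.restrict D hD) φ Z s) (hset χ)).symm ?_
      exact (ih _ (fun t ht => hE ht.1) s).mpr h1

/-- Every formula contains an atom. -/
def Form.someAtom {A P : Type} : Form A P → P
  | .atom p => p
  | .neg φ => φ.someAtom
  | .and φ _ => φ.someAtom
  | .know _ φ => φ.someAtom
  | .ann φ _ => φ.someAtom
  | .pbox φ => φ.someAtom

/-- For all φ, ψ ∈ L_PAPAL: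
(1) `□⁺(φ∧ψ) ↔ (□⁺φ ∧ □⁺ψ)` is valid on S5;
(2) if φ is valid on S5 then `□⁺φ` is valid on S5;
(3) `□⁺φ → φ` is valid on S5;
(4) for every agent `a`, `K_a □⁺φ → □⁺ K_a φ` is valid on S5. -/
theorem pbox_basic_validities (A P : Type) :
    (∀ φ ψ : Form A P,
      Valid A P (Form.iff (.pbox (.and φ ψ)) (.and (.pbox φ) (.pbox ψ)))) ∧
    (∀ φ : Form A P, Valid A P φ → Valid A P (.pbox φ)) ∧
    (∀ φ : Form A P, Valid A P (Form.imp (.pbox φ) φ)) ∧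
    (∀ (a : A) (φ : Form A P),
      Valid A P (Form.imp (.know a (.pbox φ)) (.pbox (.know a φ)))) := by
  classical
  refine ⟨?_, ?_, ?_, ?_⟩
  · -- (1)
    intro φ ψ M s
    simp only [Sat, Form.iff, Form.imp, Form.or, Form.sat]
    have key : (∀ χ : PosForm A P, PosForm.sat M χ Set.univ s →
        Form.sat M φ {t | t ∈ Set.univ ∧ PosForm.sat M χ Set.univ t} s ∧
        Form.sat M ψ {t | t ∈ Set.univ ∧ PosForm.sat M χ Set.univ t} s) ↔
        ((∀ χ : PosForm A P, PosForm.sat M χ Set.univ s →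
          Form.sat M φ {t | t ∈ Set.univ ∧ PosForm.sat M χ Set.univ t} s) ∧
         (∀ χ : PosForm A P, PosForm.sat M χ Set.univ s →
          Form.sat M ψ {t | t ∈ Set.univ ∧ PosForm.sat M χ Set.univ t} s)) := by
      constructor
      · intro h; exact ⟨fun χ hχ => (h χ hχ).1, fun χ hχ => (h χ hχ).2⟩
      · intro h χ hχ; exact ⟨h.1 χ hχ, h.2 χ hχ⟩
    tauto
  · -- (2)
    intro φ hφ M s
    intro χ hχ
    set E : Set M.S := {t | t ∈ Set.univ ∧ PosForm.sat M χ Set.univ t} with hEdef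
    have hsE : s ∈ E := ⟨trivial, hχ⟩
    have hD : E.Nonempty := ⟨s, hsE⟩
    have h := hφ (M.restrict E hD) ⟨s, hsE⟩
    have huniv : (Set.univ : Set (M.restrict E hD).S) = {x : E | x.val ∈ E} := by
      ext x; exact ⟨fun _ => x.2, fun _ => trivial⟩
    replace h := cast (congrArg (fun Z => Form.sat (M.restrict E hD) φ Z ⟨s, hsE⟩) huniv) h
    exact (sat_restrict M E hD φ E (le_refl E) ⟨s, hsE⟩).mp h
  · -- (3)
    intro φ M s
    simp only [Sat, Form.imp, Form.or, Form.sat]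
    have key : (∀ χ : PosForm A P, PosForm.sat M χ Set.univ s →
        Form.sat M φ {t | t ∈ Set.univ ∧ PosForm.sat M χ Set.univ t} s) →
        Form.sat M φ Set.univ s := by
      intro hpb
      set p : P := φ.someAtom
      have hχ : PosForm.sat M (.or (.atom p) (.natom p)) Set.univ s := by
        simp only [PosForm.sat]; exact em _
      have h1 := hpb (.or (.atom p) (.natom p)) hχ
      have hset : {t : M.S | t ∈ Set.univ ∧
          PosForm.sat M (.or (.atom p) (.natom p)) Set.univ t} = Set.univ := by
        ext t; simp only [Set.mem_setOf_eq, Set.mem_univ, true_and, iff_true]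
        simp only [PosForm.sat]; exact em _
      rwa [hset] at h1
    tauto
  · -- (4)
    intro a φ M s
    simp only [Sat, Form.imp, Form.or, Form.sat]
    have key : (∀ t, M.rel a s t → t ∈ (Set.univ : Set M.S) →
        ∀ χ : PosForm A P, PosForm.sat M χ Set.univ t →
          Form.sat M φ {u | u ∈ Set.univ ∧ PosForm.sat M χ Set.univ u} t) →
        (∀ χ : PosForm A P, PosForm.sat M χ Set.univ s →
          ∀ t, M.rel a s t → t ∈ {u | u ∈ Set.univ ∧ PosForm.sat M χ Set.univ u} →
            Form.sat M φ {u | u ∈ Set.univ ∧ PosForm.sat M χ Set.univ u} t) := by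
      intro hK χ hχ t hrel htD
      exact hK t hrel trivial χ htD.2
    tauto
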